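/- Let m be a positive even number and let B, B' ⊆ Fin m with |B| = |B'| = m/2. If B = B' then the logical operators X̄(B) = X(v_B) and Z̄(B') = Z(v_{(B')ᶜ}) anticommute: X(v_B) * Z(v_{(B')ᶜ}) = − Z(v_{(B')ᶜ}) * X(v_B); and if B ≠ B' then they commute: X(v_B) * Z(v_{(B')ᶜ}) = Z(v_{(B')ᶜ}) * X(v_B). -/

import Mathlib

/-- The vector `v_A` : its value at a label `x : Fin m → ZMod 2` is `∏_{a ∈ A} x a`. -/
def vA (m : ℕ) (A : Finset (Fin m)) : (Fin m → ZMod 2) → ZMod 2 :=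
  fun x => ∏ a ∈ A, x a

/-- Basis states: functions from qubit labels to `ZMod 2`. -/
abbrev St (m : ℕ) := (Fin m → ZMod 2) → ZMod 2

/-- The Pauli-X type operator `X(w)`: the matrix with `(y, x)` entry `1` if
`y = x + w` and `0` otherwise. -/
noncomputable def Xmat (m : ℕ) (w : St m) : Matrix (St m) (St m) ℂ :=
  Matrix.of fun y x => if y = x + w then 1 else 0

/-- `N(w, x)`: the number of qubits `q` with `w q = 1` and `x q = 1`. -/
def Nwt (m : ℕ) (w x : St m) : ℕ :=
  (Finset.univ.filter (fun q => w q = 1 ∧ x q = 1)).card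

/-- The Pauli-Z type operator `Z(w)`: the diagonal matrix with `(x, x)` entry
`(-1) ^ N(w, x)`. -/
noncomputable def Zmat (m : ℕ) (w : St m) : Matrix (St m) (St m) ℂ :=
  Matrix.diagonal fun x => (-1) ^ Nwt m w x

lemma neg_one_pow_congr' {n k : ℕ} (h : (n : ZMod 2) = (k : ZMod 2)) :
    ((-1 : ℂ)) ^ n = (-1) ^ k := by
  rw [neg_one_pow_eq_pow_mod_two, neg_one_pow_eq_pow_mod_two (n := k)]
  rw [(ZMod.natCast_eq_natCast_iff' n k 2).mp h]

lemma Nwt_cast (m : ℕ) (v x : St m) :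
    ((Nwt m v x : ℕ) : ZMod 2) = ∑ q, v q * x q := by
  unfold Nwt
  rw [Finset.card_filter]
  push_cast
  refine Finset.sum_congr rfl fun q _ => ?_
  have : ∀ a b : ZMod 2, (if a = 1 ∧ b = 1 then (1 : ZMod 2) else 0) = a * b := by decide
  exact this _ _

lemma sign_shift (m : ℕ) (v x w : St m) :
    ((-1 : ℂ)) ^ (Nwt m v (x + w)) = (-1) ^ (Nwt m v x) * (-1) ^ (Nwt m v w) := by
  rw [← pow_add]
  apply neg_one_pow_congr'
  rw [Nat.cast_add, Nwt_cast, Nwt_cast, Nwt_cast, ← Finset.sum_add_distrib]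
  exact Finset.sum_congr rfl fun q _ => by simp [Pi.add_apply, mul_add]

lemma XZ_comm (m : ℕ) (w v : St m) :
    Xmat m w * Zmat m v = ((-1 : ℂ) ^ (Nwt m v w)) • (Zmat m v * Xmat m w) := by
  ext y x
  simp only [Zmat, Matrix.mul_diagonal, Matrix.diagonal_mul, Matrix.smul_apply,
    smul_eq_mul, Xmat, Matrix.of_apply]
  by_cases h : y = x + w
  · subst h
    simp only [if_pos trivial, one_mul, mul_one]
    rw [sign_shift]
    have hb : (-1 : ℂ) ^ (Nwt m v w) * (-1) ^ (Nwt m v w) = 1 := by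
      rw [← pow_add]; exact Even.neg_one_pow ⟨_, rfl⟩
    linear_combination (-(-1 : ℂ) ^ (Nwt m v x)) * hb
  · simp [h]

lemma vA_eq_one_iff (m : ℕ) (A : Finset (Fin m)) (x : Fin m → ZMod 2) :
    vA m A x = 1 ↔ ∀ a ∈ A, x a = 1 := by
  unfold vA
  constructor
  · intro h a ha
    by_contra hne
    have hz : x a = 0 := by
      have : ∀ z : ZMod 2, ¬ z = 1 → z = 0 := by decide
      exact this _ hne
    rw [Finset.prod_eq_zero ha hz] at h
    exact zero_ne_one h
  · exact Finset.prod_eq_one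

lemma Nwt_self (m : ℕ) (B : Finset (Fin m)) :
    Nwt m (vA m Bᶜ) (vA m B) = 1 := by
  unfold Nwt
  have : (Finset.univ.filter fun q : Fin m → ZMod 2 => vA m Bᶜ q = 1 ∧ vA m B q = 1)
      = {fun _ => 1} := by
    ext x
    simp only [Finset.mem_filter, Finset.mem_univ, true_and, Finset.mem_singleton,
      vA_eq_one_iff]
    constructor
    · rintro ⟨h1, h2⟩
      funext a
      by_cases ha : a ∈ B
      · exact h2 a ha
      · exact h1 a (Finset.mem_compl.mpr ha)
    · rintro rfl
      exact ⟨fun _ _ => rfl, fun _ _ => rfl⟩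
  rw [this, Finset.card_singleton]

lemma Nwt_ne (m : ℕ) (B B' : Finset (Fin m)) (hB : B.card = m / 2)
    (hB' : B'.card = m / 2) (hne : B ≠ B') :
    Even (Nwt m (vA m B'ᶜ) (vA m B)) := by
  have hss : ¬ B' ⊆ B := by
    intro h
    exact hne (Finset.eq_of_subset_of_card_le h (hB ▸ hB'.ge)).symm
  obtain ⟨a0, ha0B', ha0B⟩ := Finset.not_subset.mp hss
  have ha0c : a0 ∉ B'ᶜ := by simp [Finset.mem_compl, ha0B']
  have hupd : ∀ (A : Finset (Fin m)) (x : Fin m → ZMod 2) (c : ZMod 2), a0 ∉ A →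
      vA m A (Function.update x a0 c) = vA m A x := by
    intro A x c hA
    exact Finset.prod_congr rfl fun a ha =>
      Function.update_of_ne (fun h => hA (by rw [← h]; exact ha)) _ _
  have key : ((Nwt m (vA m B'ᶜ) (vA m B) : ℕ) : ZMod 2) = 0 := by
    unfold Nwt
    rw [Finset.card_eq_sum_ones]
    push_cast
    refine Finset.sum_involution (fun x _ => Function.update x a0 (x a0 + 1))
      (fun x hx => by decide) (fun x hx h => ?_) (fun x hx => ?_) (fun x hx => ?_)
    · intro heq
      have := congrFun heq a0
      simp only [Function.update_self] at this
      exact (by decide : ∀ z : ZMod 2, ¬ z + 1 = z) _ this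
    · simp only [Finset.mem_filter, Finset.mem_univ, true_and] at hx ⊢
      rw [hupd _ _ _ ha0c, hupd _ _ _ ha0B]
      exact hx
    · simp only [Function.update_self, Function.update_idem]
      have : x a0 + 1 + 1 = x a0 := by
        have : ∀ z : ZMod 2, z + 1 + 1 = z := by decide
        exact this _
      rw [this, Function.update_eq_self]
  have : (2 : ℕ) ∣ Nwt m (vA m B'ᶜ) (vA m B) :=
    (ZMod.natCast_eq_zero_iff _ _).mp key
  exact even_iff_two_dvd.mpr this

/-- For `|B| = |B'| = m/2`, the logical operators `X̄(B) = X(v_B)` and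
`Z̄(B') = Z(v_{(B')ᶜ})` anticommute when `B = B'` and commute when `B ≠ B'`. -/
theorem stmt5 (m : ℕ) (hm : Even m) (h0 : 0 < m) (B B' : Finset (Fin m))
    (hB : B.card = m / 2) (hB' : B'.card = m / 2) :
    (B = B' →
      Xmat m (vA m B) * Zmat m (vA m B'ᶜ) = -(Zmat m (vA m B'ᶜ) * Xmat m (vA m B))) ∧
    (B ≠ B' →
      Xmat m (vA m B) * Zmat m (vA m B'ᶜ) = Zmat m (vA m B'ᶜ) * Xmat m (vA m B)) := by
  constructor
  · rintro rfl
    rw [XZ_comm, Nwt_self, pow_one, neg_one_smul]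
  · intro hne
    rw [XZ_comm, Even.neg_one_pow (Nwt_ne m B B' hB hB' hne), one_smul]
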